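/- If S ⊆ ℝⁿ belongs to F_σ ∩ G_δ in the Euclidean topology, then the language L(S) ⊆ Σ^ω of all base-r encodings of vectors of S belongs to F_σ ∩ G_δ in the prefix-distance topology on Σ^ω, where Σ = {0,…,r−1}ⁿ ∪ {⋆}. -/

import Mathlib

/-- The alphabet `Σ = {0,…,r−1}ⁿ ∪ {⋆}`: `some s` is a digit vector,
`none` is the separator `⋆`. -/
abbrev Alph (n r : ℕ) := Option (Fin n → Fin r)

/-- A sign symbol: a digit vector all of whose components are `0` or `r−1`. -/
def SignSym {n r : ℕ} (s : Fin n → Fin r) : Prop :=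
  ∀ i, (s i : ℕ) = 0 ∨ (s i : ℕ) = r - 1

/-- The set `V = {0,r−1}ⁿ · (Σ\{⋆})* · {⋆} · (Σ\{⋆})^ω` of structurally
valid encodings: a sign symbol, then exactly one separator, at position ≥ 1. -/
def ValidEnc {n r : ℕ} : Set (ℕ → Alph n r) :=
  {w | (∃ s, w 0 = some s ∧ SignSym s) ∧
    ∃ k, 1 ≤ k ∧ w k = none ∧ ∀ j, j ≠ k → w j ≠ none}

/-- The set `V̄₊ = (({0,r−1}ⁿ·Σ*·{⋆}) ∪ (Σ\{0,r−1}ⁿ)) · Σ* · {⋆} · Σ^ω` of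
words containing at least one separator but not validly encoding a vector. -/
def VbarPlus {n r : ℕ} : Set (ℕ → Alph n r) :=
  {w | ∃ k, w k = none ∧
    ((∃ s, w 0 = some s ∧ SignSym s ∧ ∃ j, 1 ≤ j ∧ j < k ∧ w j = none) ∨
     ((¬ ∃ s, w 0 = some s ∧ SignSym s) ∧ 1 ≤ k))}

/-- Length of the longest common prefix of two distinct infinite words. -/
noncomputable def commonLen {A : Type*} (w w' : ℕ → A) : ℕ :=
  sInf {n | w n ≠ w' n}

/-- The prefix distance on infinite words. -/
noncomputable def wdist {A : Type*} (w w' : ℕ → A) : ℝ :=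
  letI := Classical.propDecidable (w = w')
  if w = w' then 0 else 1 / (commonLen w w' + 1)

/-- Openness in the prefix-distance topology on `Σ^ω`. -/
def IsOpenW {A : Type*} (U : Set (ℕ → A)) : Prop :=
  ∀ w ∈ U, ∃ ε : ℝ, 0 < ε ∧ ∀ w', wdist w w' < ε → w' ∈ U

/-- The real value, for component `j`, of the encoding with integer-part
length `k` given by integer digits `dI 0 … dI (k-1)` (most significant
first, `dI 0` the sign digit, r's complement for negatives) and fractional
digits `dF 0, dF 1, …`. -/
noncomputable def encVal {n r : ℕ} (k : ℕ)
    (dI dF : ℕ → Fin n → Fin r) (j : Fin n) : ℝ :=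
  (∑ i ∈ Finset.range k, ((dI i j : ℕ) : ℝ) * (r : ℝ) ^ (k - 1 - i)) -
    (if (dI 0 j : ℕ) = r - 1 then (r : ℝ) ^ k else 0) +
    ∑' i : ℕ, ((dF i j : ℕ) : ℝ) * (1 / (r : ℝ)) ^ (i + 1)

/-- The word `w` is a base-`r` encoding of the vector `x ∈ ℝⁿ`: it has the
form `w_I ⋆ w_F` with a sign prefix, and componentwise decodes to `x`. -/
def Encodes {n r : ℕ} (w : ℕ → Alph n r) (x : Fin n → ℝ) : Prop :=
  ∃ (k : ℕ) (dI dF : ℕ → Fin n → Fin r),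
    1 ≤ k ∧ SignSym (dI 0) ∧
    (∀ i, i < k → w i = some (dI i)) ∧ w k = none ∧
    (∀ i, w (k + 1 + i) = some (dF i)) ∧
    ∀ j, x j = encVal k dI dF j

/-- The language `L(S)` of all base-`r` encodings of vectors of `S ⊆ ℝⁿ`. -/
def LangOf {n r : ℕ} (S : Set (Fin n → ℝ)) : Set (ℕ → Alph n r) :=
  {w | ∃ x ∈ S, Encodes w x}

/-- A set is `F_σ` if it is a countable union of closed sets. -/
def IsFsigma {α : Type*} [TopologicalSpace α] (s : Set α) : Prop :=
  ∃ C : ℕ → Set α, (∀ i, IsClosed (C i)) ∧ s = ⋃ i, C i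

/-- `F_σ` in the prefix-distance topology on `Σ^ω`. -/
def IsFsigmaW {A : Type*} (L : Set (ℕ → A)) : Prop :=
  ∃ C : ℕ → Set (ℕ → A), (∀ i, IsOpenW (C i)ᶜ) ∧ L = ⋃ i, C i

/-- `G_δ` in the prefix-distance topology on `Σ^ω`. -/
def IsGdeltaW {A : Type*} (L : Set (ℕ → A)) : Prop :=
  ∃ U : ℕ → Set (ℕ → A), (∀ i, IsOpenW (U i)) ∧ L = ⋂ i, U i

namespace LangAux

variable {n r : ℕ} {A : Type*}

lemma agree_of_wdist_lt {w w' : ℕ → A} {m : ℕ}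
    (h : wdist w w' < 1 / (m + 1)) : ∀ i < m + 1, w i = w' i := by
  intro i hi
  by_cases hww : w = w'
  · rw [hww]
  · unfold wdist at h
    rw [if_neg hww] at h
    have hL : (m : ℝ) + 1 < (commonLen w w' : ℝ) + 1 :=
      lt_of_one_div_lt_one_div (by positivity) h
    have hmL : m < commonLen w w' := by exact_mod_cast (by linarith : (m:ℝ) < (commonLen w w' : ℝ))
    have hmL' : i < sInf {j | w j ≠ w' j} := by
      have : commonLen w w' = sInf {j | w j ≠ w' j} := rfl
      omega
    have : i ∉ {j | w j ≠ w' j} := Nat.notMem_of_lt_sInf hmL'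
    simpa using this

lemma wdist_le {w w' : ℕ → A} {m : ℕ} (h : ∀ i < m, w i = w' i) :
    wdist w w' ≤ 1 / (m + 1) := by
  unfold wdist
  split_ifs with hww
  · positivity
  · have hne : {j | w j ≠ w' j}.Nonempty := by
      rcases Function.ne_iff.mp hww with ⟨i, hi⟩
      exact ⟨i, hi⟩
    have hmem := Nat.sInf_mem hne
    have hm : m ≤ commonLen w w' := by
      by_contra hlt
      push_neg at hlt
      exact hmem (h _ hlt)
    apply one_div_le_one_div_of_le (by positivity)
    have : (m:ℝ) ≤ commonLen w w' := by exact_mod_cast hm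
    linarith

/-- `T` depends only on the first `m` letters. -/
def Det (m : ℕ) (T : Set (ℕ → A)) : Prop :=
  ∀ ⦃w w' : ℕ → A⦄, (∀ i < m, w i = w' i) → w ∈ T → w' ∈ T

lemma isOpenW_of_det {m : ℕ} {T : Set (ℕ → A)} (h : Det m T) : IsOpenW T := by
  intro w hw
  refine ⟨1 / (m + 1), by positivity, fun w' hlt => ?_⟩
  exact h (fun i hi => agree_of_wdist_lt hlt i (by omega)) hw

lemma Det.compl {m : ℕ} {T : Set (ℕ → A)} (h : Det m T) : Det m Tᶜ := by
  intro w w' hag hw hmem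
  exact hw (h (fun i hi => (hag i hi).symm) hmem)

lemma isOpenW_iUnion {ι : Sort*} {U : ι → Set (ℕ → A)} (h : ∀ i, IsOpenW (U i)) :
    IsOpenW (⋃ i, U i) := by
  intro w hw
  rcases Set.mem_iUnion.mp hw with ⟨i, hi⟩
  rcases h i w hi with ⟨ε, hε, hb⟩
  exact ⟨ε, hε, fun w' h' => Set.mem_iUnion.mpr ⟨i, hb w' h'⟩⟩

lemma isOpenW_inter {U V : Set (ℕ → A)} (hU : IsOpenW U) (hV : IsOpenW V) :
    IsOpenW (U ∩ V) := by
  rintro w ⟨h1, h2⟩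
  obtain ⟨ε1, he1, hb1⟩ := hU w h1
  obtain ⟨ε2, he2, hb2⟩ := hV w h2
  exact ⟨min ε1 ε2, lt_min he1 he2, fun w' h' =>
    ⟨hb1 w' (h'.trans_le (min_le_left _ _)), hb2 w' (h'.trans_le (min_le_right _ _))⟩⟩

lemma isOpenW_union {U V : Set (ℕ → A)} (hU : IsOpenW U) (hV : IsOpenW V) :
    IsOpenW (U ∪ V) := by
  rintro w (h | h)
  · rcases hU w h with ⟨ε, hε, hb⟩; exact ⟨ε, hε, fun w' h' => Or.inl (hb w' h')⟩
  · rcases hV w h with ⟨ε, hε, hb⟩; exact ⟨ε, hε, fun w' h' => Or.inr (hb w' h')⟩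

/-- Every closed set is a `G_δ`. -/
lemma gdelta_of_closed {C : Set (ℕ → A)} (hC : IsOpenW Cᶜ) :
    ∃ G : ℕ → Set (ℕ → A), (∀ m, IsOpenW (G m)) ∧ (⋂ m, G m) = C := by
  refine ⟨fun m => {w | ∃ w' ∈ C, ∀ i < m, w i = w' i}, fun m => ?_, ?_⟩
  · apply isOpenW_of_det (m := m)
    rintro w w' hag ⟨u, hu, hagu⟩
    exact ⟨u, hu, fun i hi => ((hag i hi).symm).trans (hagu i hi)⟩
  · ext w
    constructor
    · intro hw
      by_contra hwc
      rcases hC w hwc with ⟨ε, hε, hb⟩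
      rcases exists_nat_one_div_lt hε with ⟨m, hm⟩
      rcases Set.mem_iInter.mp hw (m + 1) with ⟨w', hw', hag⟩
      have hle := wdist_le hag
      have hlt : wdist w w' < ε := by
        refine lt_of_le_of_lt hle (lt_of_le_of_lt ?_ hm)
        apply one_div_le_one_div_of_le
        · positivity
        · push_cast; linarith
      exact (hb w' hlt) hw'
    · intro hw
      exact Set.mem_iInter.mpr fun m => ⟨w, hw, fun i _ => rfl⟩

end LangAux
namespace LangAux

/-- The numeric value of a letter at component `j` (separator counts as `0`). -/
def digN {n r : ℕ} (a : Alph n r) (j : Fin n) : ℕ :=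
  match a with
  | none => 0
  | some s => (s j : ℕ)

/-- Decoding with integer part of length `k`, reading digits directly off the word. -/
noncomputable def Ek {n r : ℕ} (k : ℕ) (w : ℕ → Alph n r) : Fin n → ℝ := fun j =>
  (∑ i ∈ Finset.range k, ((digN (w i) j : ℕ) : ℝ) * (r : ℝ) ^ (k - 1 - i)) -
    (if digN (w 0) j = r - 1 then (r : ℝ) ^ k else 0) +
    ∑' i : ℕ, ((digN (w (k + 1 + i)) j : ℕ) : ℝ) * (1 / (r : ℝ)) ^ (i + 1)

variable {n r : ℕ}

lemma digN_lt (hr : 0 < r) (a : Alph n r) (j : Fin n) : digN a j < r := by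
  cases a with
  | none => simpa [digN] using hr
  | some s => simpa [digN] using (s j).2

lemma encVal_eq_Ek {k : ℕ} {dI dF : ℕ → Fin n → Fin r} {w : ℕ → Alph n r}
    (hk : 1 ≤ k) (hI : ∀ i < k, w i = some (dI i))
    (hF : ∀ i, w (k + 1 + i) = some (dF i)) (j : Fin n) :
    encVal k dI dF j = Ek k w j := by
  unfold encVal Ek
  have h0 : digN (w 0) j = (dI 0 j : ℕ) := by rw [hI 0 hk]; rfl
  have hs : ∀ i ∈ Finset.range k,
      ((dI i j : ℕ) : ℝ) * (r : ℝ) ^ (k - 1 - i) =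
        ((digN (w i) j : ℕ) : ℝ) * (r : ℝ) ^ (k - 1 - i) := by
    intro i hi
    rw [hI i (Finset.mem_range.mp hi)]; rfl
  rw [Finset.sum_congr rfl hs, h0]
  congr 1
  exact tsum_congr fun i => by rw [hF i]; rfl

lemma ek_diff (hr : 2 ≤ r) (k N : ℕ) {w w' : ℕ → Alph n r}
    (h : ∀ i < k + 1 + N, w i = w' i) (j : Fin n) :
    |Ek k w j - Ek k w' j| ≤ 4 * (1 / (r : ℝ)) ^ N := by
  have hr0 : (0:ℝ) < r := by positivity
  have hrne : (r:ℝ) ≠ 0 := ne_of_gt hr0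
  have hinvlt : (1 / (r:ℝ)) < 1 := by
    rw [div_lt_one hr0]; exact_mod_cast by omega
  have hinvnn : (0:ℝ) ≤ 1 / r := by positivity
  have hgeom : Summable fun i : ℕ => (1 / (r:ℝ)) ^ i :=
    summable_geometric_of_lt_one hinvnn hinvlt
  set f : ℕ → ℝ := fun i => ((digN (w (k + 1 + i)) j : ℕ) : ℝ) * (1 / (r : ℝ)) ^ (i + 1)
  set g : ℕ → ℝ := fun i => ((digN (w' (k + 1 + i)) j : ℕ) : ℝ) * (1 / (r : ℝ)) ^ (i + 1)
  have hbound : ∀ (v : ℕ → Alph n r) (i : ℕ),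
      |((digN (v (k + 1 + i)) j : ℕ) : ℝ) * (1 / (r : ℝ)) ^ (i + 1)| ≤ (1 / (r:ℝ)) ^ i := by
    intro v i
    have hd : ((digN (v (k + 1 + i)) j : ℕ) : ℝ) ≤ r := by
      exact_mod_cast le_of_lt (digN_lt (by omega) _ _)
    have hnn : (0:ℝ) ≤ ((digN (v (k + 1 + i)) j : ℕ) : ℝ) := Nat.cast_nonneg _
    rw [abs_of_nonneg (by positivity)]
    calc ((digN (v (k + 1 + i)) j : ℕ) : ℝ) * (1 / (r : ℝ)) ^ (i + 1)
        ≤ (r:ℝ) * (1 / (r : ℝ)) ^ (i + 1) := by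
          apply mul_le_mul_of_nonneg_right hd (by positivity)
      _ = (1 / (r:ℝ)) ^ i := by
          rw [pow_succ]; field_simp
  have hf : Summable f := Summable.of_norm_bounded hgeom (fun i => hbound w i)
  have hg : Summable g := Summable.of_norm_bounded hgeom (fun i => hbound w' i)
  have hfg : Summable (fun i => f i - g i) := hf.sub hg
  -- integer parts agree
  have hint : Ek k w j - Ek k w' j = (∑' i, f i) - ∑' i, g i := by
    unfold Ek
    have h0 : digN (w 0) j = digN (w' 0) j := by rw [h 0 (by omega)]
    have hs : ∀ i ∈ Finset.range k,
        ((digN (w i) j : ℕ) : ℝ) * (r : ℝ) ^ (k - 1 - i) =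
          ((digN (w' i) j : ℕ) : ℝ) * (r : ℝ) ^ (k - 1 - i) := by
      intro i hi
      rw [h i (by have := Finset.mem_range.mp hi; omega)]
    rw [Finset.sum_congr rfl hs, h0]
    ring
  rw [hint]
  rw [← Summable.tsum_sub hf hg]
  have hsplit := (Summable.sum_add_tsum_nat_add (f := fun i => f i - g i) N hfg).symm
  have hzero : ∑ i ∈ Finset.range N, (f i - g i) = 0 := by
    apply Finset.sum_eq_zero
    intro i hi
    have : w (k + 1 + i) = w' (k + 1 + i) := h _ (by have := Finset.mem_range.mp hi; omega)
    simp [f, g, this]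
  rw [hsplit, hzero, zero_add]
  have htail : ∀ i : ℕ, ‖f (i + N) - g (i + N)‖ ≤ 2 * (1 / (r:ℝ)) ^ (i + N) := by
    intro i
    calc ‖f (i + N) - g (i + N)‖ ≤ |f (i + N)| + |g (i + N)| := abs_sub _ _
      _ ≤ (1 / (r:ℝ)) ^ (i + N) + (1 / (r:ℝ)) ^ (i + N) := add_le_add (hbound w _) (hbound w' _)
      _ = 2 * (1 / (r:ℝ)) ^ (i + N) := by ring
  have hsum2 : Summable fun i : ℕ => 2 * (1 / (r:ℝ)) ^ (i + N) := by
    apply Summable.mul_left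
    exact (summable_nat_add_iff N).mpr hgeom
  have := norm_tsum_le_tsum_norm (f := fun i => f (i + N) - g (i + N))
    (Summable.of_nonneg_of_le (fun i => norm_nonneg _) htail hsum2)
  have hle2 : ∑' i, ‖f (i + N) - g (i + N)‖ ≤ ∑' i : ℕ, 2 * (1 / (r:ℝ)) ^ (i + N) :=
    Summable.tsum_le_tsum htail (Summable.of_nonneg_of_le (fun i => norm_nonneg _) htail hsum2) hsum2
  have hval : ∑' i : ℕ, 2 * (1 / (r:ℝ)) ^ (i + N) = 2 * (1 / (r:ℝ)) ^ N * (1 - 1/(r:ℝ))⁻¹ := by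
    have : ∀ i : ℕ, 2 * (1 / (r:ℝ)) ^ (i + N) = (2 * (1 / (r:ℝ)) ^ N) * (1 / (r:ℝ)) ^ i := by
      intro i; rw [pow_add]; ring
    rw [tsum_congr this, tsum_mul_left, tsum_geometric_of_lt_one hinvnn hinvlt]
  have hinvle : (1 - 1/(r:ℝ))⁻¹ ≤ 2 := by
    have h2 : (1:ℝ)/r ≤ 1/2 := by
      apply one_div_le_one_div_of_le
      · norm_num
      · exact_mod_cast hr
    have h3 : (0:ℝ) < 1 - 1/r := by linarith
    rw [inv_le_comm₀ h3 (by norm_num)]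
    linarith
  have hpnn : (0:ℝ) ≤ (1 / (r:ℝ)) ^ N := by positivity
  calc ‖∑' i, (f (i + N) - g (i + N))‖ ≤ ∑' i, ‖f (i + N) - g (i + N)‖ := this
    _ ≤ ∑' i : ℕ, 2 * (1 / (r:ℝ)) ^ (i + N) := hle2
    _ = 2 * (1 / (r:ℝ)) ^ N * (1 - 1/(r:ℝ))⁻¹ := hval
    _ ≤ 2 * (1 / (r:ℝ)) ^ N * 2 := by nlinarith [hpnn]
    _ = 4 * (1 / (r:ℝ)) ^ N := by ring

/-- Preimages of open sets under `Ek` are open. -/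
lemma isOpenW_preimage (hr : 2 ≤ r) (k : ℕ) {U : Set (Fin n → ℝ)} (hU : IsOpen U) :
    IsOpenW (Ek (n := n) (r := r) k ⁻¹' U) := by
  intro w hw
  rcases Metric.isOpen_iff.mp hU (Ek k w) hw with ⟨ε, hε, hball⟩
  have hinvlt : (1 / (r:ℝ)) < 1 := by
    rw [div_lt_one (by positivity)]; exact_mod_cast by omega
  obtain ⟨N, hN⟩ := exists_pow_lt_of_lt_one (show (0:ℝ) < ε / 8 by positivity) hinvlt
  refine ⟨1 / (k + N + 1), by positivity, fun w' hlt => ?_⟩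
  have hag : ∀ i < k + N + 1, w i = w' i := agree_of_wdist_lt (by exact_mod_cast hlt)
  have hag' : ∀ i < k + 1 + N, w i = w' i := fun i hi => hag i (by omega)
  have hd : ∀ j, |Ek k w' j - Ek k w j| ≤ 4 * (1 / (r:ℝ)) ^ N := by
    intro j
    rw [abs_sub_comm]
    exact ek_diff hr k N hag' j
  apply hball
  rw [Metric.mem_ball]
  have hle : dist (Ek k w') (Ek k w) ≤ 4 * (1 / (r:ℝ)) ^ N := by
    rw [dist_pi_le_iff (by positivity)]
    intro j
    rw [Real.dist_eq]
    exact hd j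
  have : 4 * (1 / (r:ℝ)) ^ N < ε := by nlinarith [hN]
  exact lt_of_le_of_lt hle this

end LangAux
namespace LangAux

variable {n r : ℕ}

/-- The clopen set of words with a sign prefix, separator at position `k ≥ 1`,
and no separator before position `k`. -/
def Qk (n r k : ℕ) : Set (ℕ → Alph n r) :=
  {w | 1 ≤ k ∧ (∃ s, w 0 = some s ∧ SignSym s) ∧ w k = none ∧
    ∀ j, 1 ≤ j → j < k → w j ≠ none}

lemma det_Qk (k : ℕ) : Det (k + 1) (Qk n r k) := by
  rintro w w' hag ⟨hk, ⟨s, hs, hss⟩, hnone, hmid⟩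
  refine ⟨hk, ⟨s, by rw [← hag 0 (by omega)]; exact hs, hss⟩,
    by rw [← hag k (by omega)]; exact hnone, fun j h1 h2 => ?_⟩
  rw [← hag j (by omega)]
  exact hmid j h1 h2

lemma isOpenW_vbarPlus : IsOpenW (VbarPlus (n := n) (r := r)) := by
  have : VbarPlus (n := n) (r := r) = ⋃ k, {w : ℕ → Alph n r | w k = none ∧
      ((∃ s, w 0 = some s ∧ SignSym s ∧ ∃ j, 1 ≤ j ∧ j < k ∧ w j = none) ∨
       ((¬ ∃ s, w 0 = some s ∧ SignSym s) ∧ 1 ≤ k))} := by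
    ext w
    simp only [VbarPlus, Set.mem_iUnion, Set.mem_setOf_eq]
  rw [this]
  apply isOpenW_iUnion
  intro k
  apply isOpenW_of_det (m := k + 1)
  rintro w w' hag ⟨hnone, hcase⟩
  have h0 : w 0 = w' 0 := hag 0 (by omega)
  refine ⟨by rw [← hag k (by omega)]; exact hnone, ?_⟩
  rcases hcase with ⟨s, hs, hss, j, h1, h2, h3⟩ | ⟨hns, hk⟩
  · exact Or.inl ⟨s, by rw [← h0]; exact hs, hss,
      j, h1, h2, by rw [← hag j (by omega)]; exact h3⟩
  · exact Or.inr ⟨by rw [← h0]; exact hns, hk⟩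

lemma Qk_disjoint {k k' : ℕ} {w : ℕ → Alph n r}
    (h : w ∈ Qk n r k) (h' : w ∈ Qk n r k') : k = k' := by
  obtain ⟨hk, _, hnone, hmid⟩ := h
  obtain ⟨hk', _, hnone', hmid'⟩ := h'
  rcases lt_trichotomy k k' with hlt | he | hgt
  · exact absurd hnone (hmid' k hk hlt)
  · exact he
  · exact absurd hnone' (hmid k' hk' hgt)

/-- The key decomposition of `L(S)`. -/
lemma langOf_eq (hr : 0 < r) (S : Set (Fin n → ℝ)) :
    LangOf (r := r) S =
      (⋃ k, Qk n r k ∩ Ek (n := n) (r := r) k ⁻¹' S) ∩ (VbarPlus (n := n) (r := r))ᶜ := by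
  ext w
  constructor
  · rintro ⟨x, hxS, k, dI, dF, hk, hsign, hI, hk0, hF, hval⟩
    have hEk : Ek k w = x := by
      funext j
      rw [hval j, encVal_eq_Ek hk hI hF]
    have hno : ∀ j, j ≠ k → w j ≠ none := by
      intro j hj hnone
      rcases lt_or_gt_of_ne hj with hlt | hgt
      · rw [hI j hlt] at hnone; exact Option.some_ne_none _ hnone
      · have heq : k + 1 + (j - (k + 1)) = j := by omega
        have hsome := hF (j - (k + 1))
        rw [heq] at hsome
        rw [hsome] at hnone; exact Option.some_ne_none _ hnone
    constructor
    · refine Set.mem_iUnion.mpr ⟨k, ⟨hk, ⟨dI 0, hI 0 hk, hsign⟩, hk0,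
        fun j h1 h2 => hno j (by omega)⟩, ?_⟩
      show Ek k w ∈ S
      rw [hEk]; exact hxS
    · rintro ⟨k', hk'none, hcase⟩
      have hkk : k' = k := by
        by_contra hne
        exact hno k' hne hk'none
      subst hkk
      rcases hcase with ⟨s, hs, hss, j, h1, h2, h3⟩ | ⟨hns, _⟩
      · exact hno j (by omega) h3
      · exact hns ⟨dI 0, hI 0 hk, hsign⟩
  · rintro ⟨hmem, hnv⟩
    obtain ⟨k, ⟨⟨hk, ⟨s, hs, hss⟩, hknone, hmid⟩, hEkS⟩⟩ := Set.mem_iUnion.mp hmem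
    have hno : ∀ j, j ≠ k → w j ≠ none := by
      intro j hj hnone
      rcases lt_or_gt_of_ne hj with hlt | hgt
      · rcases Nat.eq_zero_or_pos j with h0 | h1
        · subst h0; rw [hs] at hnone; exact Option.some_ne_none _ hnone
        · exact hmid j h1 hlt hnone
      · exact hnv ⟨j, hnone, Or.inl ⟨s, hs, hss, k, hk, hgt, hknone⟩⟩
    set d0 : Fin n → Fin r := fun _ => ⟨0, hr⟩ with hd0
    set dI : ℕ → Fin n → Fin r := fun i => (w i).getD d0 with hdI
    set dF : ℕ → Fin n → Fin r := fun i => (w (k + 1 + i)).getD d0 with hdF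
    have hIsome : ∀ i, i < k → w i = some (dI i) := by
      intro i hi
      rcases Option.ne_none_iff_exists'.mp (hno i (by omega)) with ⟨t, ht⟩
      rw [ht]; simp [hdI, ht]
    have hFsome : ∀ i, w (k + 1 + i) = some (dF i) := by
      intro i
      rcases Option.ne_none_iff_exists'.mp (hno (k + 1 + i) (by omega)) with ⟨t, ht⟩
      rw [ht]; simp [hdF, ht]
    have hsignI : SignSym (dI 0) := by
      have : dI 0 = s := by rw [hdI]; simp [hs]
      rw [this]; exact hss
    exact ⟨Ek k w, hEkS, k, dI, dF, hk, hsignI, hIsome, hknone, hFsome,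
      fun j => (encVal_eq_Ek hk hIsome hFsome j).symm⟩

end LangAux

/-- If `S ⊆ ℝⁿ` belongs to `F_σ ∩ G_δ` in the Euclidean topology, then the
language `L(S) ⊆ Σ^ω` of all base-`r` encodings of vectors of `S` belongs to
`F_σ ∩ G_δ` in the prefix-distance topology on `Σ^ω`. -/
theorem langOf_fsigma_gdelta {n r : ℕ} (hn : 0 < n) (hr : 2 ≤ r)
    (S : Set (Fin n → ℝ)) (h1 : IsFsigma S) (h2 : IsGδ S) :
    IsFsigmaW (LangOf (r := r) S) ∧ IsGdeltaW (LangOf (r := r) S) := by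
  classical
  have hr0 : 0 < r := by omega
  have hdec := LangAux.langOf_eq (n := n) hr0 S
  have hQopen : ∀ k, IsOpenW (LangAux.Qk n r k) :=
    fun k => LangAux.isOpenW_of_det (LangAux.det_Qk k)
  have hQclosed : ∀ k, IsOpenW (LangAux.Qk n r k)ᶜ :=
    fun k => LangAux.isOpenW_of_det (LangAux.det_Qk k).compl
  have hVopen := LangAux.isOpenW_vbarPlus (n := n) (r := r)
  constructor
  · -- F_σ
    obtain ⟨C, hCcl, hCS⟩ := h1
    refine ⟨fun m => (LangAux.Qk n r m.unpair.1 ∩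
        LangAux.Ek (n := n) (r := r) m.unpair.1 ⁻¹' C m.unpair.2) ∩
        (VbarPlus (n := n) (r := r))ᶜ, fun m => ?_, ?_⟩
    · have hcompl : ((LangAux.Qk n r m.unpair.1 ∩
          LangAux.Ek (n := n) (r := r) m.unpair.1 ⁻¹' C m.unpair.2) ∩
          (VbarPlus (n := n) (r := r))ᶜ)ᶜ =
          ((LangAux.Qk n r m.unpair.1)ᶜ ∪
            (LangAux.Ek (n := n) (r := r) m.unpair.1 ⁻¹' (C m.unpair.2)ᶜ)) ∪
            VbarPlus (n := n) (r := r) := by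
        rw [Set.compl_inter, Set.compl_inter, compl_compl, Set.preimage_compl]
      rw [hcompl]
      exact LangAux.isOpenW_union
        (LangAux.isOpenW_union (hQclosed _)
          (LangAux.isOpenW_preimage hr _ (hCcl _).isOpen_compl)) hVopen
    · rw [hdec, hCS]
      ext w
      constructor
      · rintro ⟨hU, hV⟩
        rcases Set.mem_iUnion.mp hU with ⟨k, hQ, hpre⟩
        rcases Set.mem_iUnion.mp hpre with ⟨i, hC⟩
        refine Set.mem_iUnion.mpr ⟨Nat.pair k i, ⟨?_, ?_⟩, hV⟩
        · simp only [Nat.unpair_pair]; exact hQ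
        · simp only [Nat.unpair_pair]; exact hC
      · intro hw
        rcases Set.mem_iUnion.mp hw with ⟨m, ⟨hQ, hC⟩, hV⟩
        exact ⟨Set.mem_iUnion.mpr ⟨m.unpair.1, hQ, Set.mem_iUnion.mpr ⟨m.unpair.2, hC⟩⟩, hV⟩
  · -- G_δ
    obtain ⟨U, hUo, hUS⟩ := isGδ_iff_eq_iInter_nat.mp h2
    obtain ⟨G, hGo, hGV⟩ := LangAux.gdelta_of_closed
      (C := (VbarPlus (n := n) (r := r))ᶜ) (by rw [compl_compl]; exact hVopen)
    refine ⟨fun m => ((⋃ k, LangAux.Qk n r k) ∩ G m.unpair.1) ∩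
        (⋃ k, LangAux.Qk n r k ∩ LangAux.Ek (n := n) (r := r) k ⁻¹' U m.unpair.2),
        fun m => ?_, ?_⟩
    · exact LangAux.isOpenW_inter
        (LangAux.isOpenW_inter (LangAux.isOpenW_iUnion hQopen) (hGo _))
        (LangAux.isOpenW_iUnion fun k => LangAux.isOpenW_inter (hQopen k)
          (LangAux.isOpenW_preimage hr k (hUo _)))
    · rw [hdec, hUS]
      ext w
      constructor
      · rintro ⟨hUn, hV⟩
        rcases Set.mem_iUnion.mp hUn with ⟨k, hQ, hpre⟩
        have hwG : w ∈ ⋂ m, G m := by rw [hGV]; exact hV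
        refine Set.mem_iInter.mpr fun m =>
          ⟨⟨Set.mem_iUnion.mpr ⟨k, hQ⟩, Set.mem_iInter.mp hwG _⟩,
            Set.mem_iUnion.mpr ⟨k, hQ, Set.mem_iInter.mp hpre m.unpair.2⟩⟩
      · intro hw
        have hV : w ∈ (VbarPlus (n := n) (r := r))ᶜ := by
          rw [← hGV]
          refine Set.mem_iInter.mpr fun m => ?_
          have := (Set.mem_iInter.mp hw (Nat.pair m 0)).1.2
          simpa only [Nat.unpair_pair] using this
        rcases Set.mem_iUnion.mp (Set.mem_iInter.mp hw 0).1.1 with ⟨k, hQ⟩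
        refine ⟨Set.mem_iUnion.mpr ⟨k, hQ, Set.mem_iInter.mpr fun i => ?_⟩, hV⟩
        have := (Set.mem_iInter.mp hw (Nat.pair 0 i)).2
        rw [show (Nat.pair 0 i).unpair.2 = i by rw [Nat.unpair_pair]] at this
        rcases Set.mem_iUnion.mp this with ⟨k', hQ', hpre'⟩
        have hkk : k' = k := LangAux.Qk_disjoint hQ' hQ
        subst hkk
        exact hpre'
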